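/- Let g be a bounded continuous function on ℝⁿ all of whose partial derivatives up to order 2 exist and satisfy ‖∂^α g‖_∞ ≤ C for |α| ≤ 2, and let u_g be its Poisson extension to the upper half-space. Then y^{2−s} |∂²u_g/∂y²(x,y)| ≤ C' min(y^{2−s}, y^{−s}) for all (x,y), where 0 < s ≤ 1; in particular this bound tends to 0 uniformly in x both as y → 0⁺ and as y → ∞. -/

import Mathlib

open MeasureTheory Metric

/-- The Poisson kernel `P_y(x) = c y (|x|² + y²)^{-(n+1)/2}` on the upper half-space. -/
noncomputable def halfSpacePoissonKernel (n : ℕ) (c : ℝ) (y : ℝ)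
    (x : EuclideanSpace ℝ (Fin n)) : ℝ :=
  c * y / (‖x‖ ^ 2 + y ^ 2) ^ (((n : ℝ) + 1) / 2)

noncomputable def pk1 (n : ℕ) (c t : ℝ) (z : EuclideanSpace ℝ (Fin n)) : ℝ :=
  c * (‖z‖^2 + t^2) ^ (-(((n:ℝ)+1)/2))
    - 2*c*(((n:ℝ)+1)/2)*t^2 * (‖z‖^2 + t^2) ^ (-(((n:ℝ)+1)/2)-1)

noncomputable def pk2 (n : ℕ) (c t : ℝ) (z : EuclideanSpace ℝ (Fin n)) : ℝ :=
  -6*c*(((n:ℝ)+1)/2)*t * (‖z‖^2 + t^2) ^ (-(((n:ℝ)+1)/2)-1)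
    + 4*c*(((n:ℝ)+1)/2)*((((n:ℝ)+1)/2)+1)*t^3 * (‖z‖^2 + t^2) ^ (-(((n:ℝ)+1)/2)-2)

lemma rpow_shift (A p : ℝ) (hA : 0 < A) : A ^ (p - 1) = A ^ p * A⁻¹ := by
  rw [← Real.rpow_neg_one A, ← Real.rpow_add hA]; ring_nf

lemma mul_rpow_shift_le (A r e : ℝ) (hA : 0 < A) (hrA : r ≤ A) :
    r * A ^ (-e-1) ≤ A ^ (-e) := by
  rw [show (-e-1:ℝ) = -e - 1 from rfl, rpow_shift _ (-e) hA]
  have h2 : (0:ℝ) < A^(-e) := Real.rpow_pos_of_pos hA _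
  calc r * (A^(-e) * A⁻¹) = (r * A⁻¹) * A^(-e) := by ring
    _ ≤ 1 * A^(-e) := by
        apply mul_le_mul_of_nonneg_right _ h2.le
        rw [mul_inv_le_iff₀ hA]; simpa using hrA
    _ = A^(-e) := one_mul _

lemma t_mul_le (a t e : ℝ) (ha : 0 ≤ a) (ht : 0 < t) :
    t * (a+t^2)^(-e-1) ≤ t⁻¹ * (a+t^2)^(-e) := by
  have hA : 0 < a + t^2 := by nlinarith
  have h2 : (0:ℝ) < (a+t^2)^(-e) := Real.rpow_pos_of_pos hA _
  have h3 : (a+t^2)⁻¹ ≤ (t^2)⁻¹ := by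
    apply inv_anti₀ (by positivity) (by nlinarith)
  rw [rpow_shift _ (-e) hA]
  calc t * ((a+t^2)^(-e) * (a+t^2)⁻¹) ≤ t * ((a+t^2)^(-e) * (t^2)⁻¹) := by
        apply mul_le_mul_of_nonneg_left (mul_le_mul_of_nonneg_left h3 h2.le) ht.le
    _ = t⁻¹ * (a+t^2)^(-e) := by field_simp

lemma base_mono (a e b t : ℝ) (ha : 0 ≤ a) (he : 0 ≤ e) (hb : 0 < b) (hbt : b ≤ t) :
    (a + t^2)^(-e) ≤ (a + b^2)^(-e) :=
  Real.rpow_le_rpow_of_nonpos (by nlinarith) (by nlinarith) (by linarith)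

lemma hasDerivAt_base (a p : ℝ) {t : ℝ} (h : 0 < a + t^2) :
    HasDerivAt (fun t : ℝ => (a + t^2) ^ p) (p * (a + t^2) ^ (p-1) * (2*t)) t := by
  have h1 : HasDerivAt (fun t : ℝ => a + t^2) (2*t) t := by
    simpa using ((hasDerivAt_pow 2 t).const_add a)
  exact (Real.hasDerivAt_rpow_const (Or.inl h.ne')).comp t h1

lemma hasDerivAt_pk_aux (c e a : ℝ) (ha : 0 ≤ a) {t : ℝ} (ht : 0 < t) :
    HasDerivAt (fun t : ℝ => c * t / (a + t^2) ^ e)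
      (c * (a + t^2) ^ (-e) - 2*c*e*t^2 * (a + t^2) ^ (-e-1)) t := by
  have hA : 0 < a + t^2 := by nlinarith
  have hfun : (fun t : ℝ => c * t / (a + t^2) ^ e)
      = fun t : ℝ => c * t * (a + t^2) ^ (-e) := by
    funext u
    rw [Real.rpow_neg (by nlinarith : (0:ℝ) ≤ a + u^2), div_eq_mul_inv]
  rw [hfun]
  have h2 := hasDerivAt_base a (-e) hA
  have h3 : HasDerivAt (fun t : ℝ => c * t) c t := by
    simpa using (hasDerivAt_id t).const_mul c
  have h4 := h3.mul h2
  exact h4.congr_deriv (by ring)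

lemma hasDerivAt_pk1_aux (c e a : ℝ) (ha : 0 ≤ a) {t : ℝ} (ht : 0 < t) :
    HasDerivAt (fun t : ℝ => c * (a + t^2) ^ (-e) - 2*c*e*t^2 * (a + t^2) ^ (-e-1))
      (-6*c*e*t * (a + t^2) ^ (-e-1) + 4*c*e*(e+1)*t^3 * (a + t^2) ^ (-e-2)) t := by
  have hA : 0 < a + t^2 := by nlinarith
  have h2 := (hasDerivAt_base a (-e) hA).const_mul c
  have h4 := hasDerivAt_base a (-e-1) hA
  rw [show (-e - 1 - 1 : ℝ) = -e - 2 by ring] at h4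
  have h5 : HasDerivAt (fun t : ℝ => 2*c*e*t^2) (2*c*e*(2*t)) t := by
    have := (hasDerivAt_pow 2 t).const_mul (2*c*e)
    simpa [mul_assoc] using this
  have h7 := h2.sub (h5.mul h4)
  exact h7.congr_deriv (by ring)

lemma abs_pk1_le (c e a t : ℝ) (hc : 0 ≤ c) (he : 0 ≤ e) (ha : 0 ≤ a) (ht : 0 < t) :
    |c * (a + t^2) ^ (-e) - 2*c*e*t^2 * (a + t^2) ^ (-e-1)|
      ≤ (1 + 2*e) * c * (a + t^2) ^ (-e) := by
  have hA : 0 < a + t^2 := by nlinarith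
  have h1 : (a + t^2) ^ (-e-1) = (a + t^2) ^ (-e) * (a + t^2)⁻¹ := rpow_shift _ (-e) hA
  have h2 : (0:ℝ) < (a + t^2) ^ (-e) := Real.rpow_pos_of_pos hA _
  have h3 : t^2 * (a + t^2)⁻¹ ≤ 1 := by
    rw [mul_inv_le_iff₀ hA]; nlinarith
  have key0 : (0:ℝ) ≤ 2*c*e*t^2 * ((a + t^2) ^ (-e) * (a + t^2)⁻¹) := by positivity
  have key1 : 2*c*e*t^2 * ((a + t^2) ^ (-e) * (a + t^2)⁻¹) ≤ 2*c*e * (a + t^2) ^ (-e) := by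
    have := mul_le_of_le_one_right (show (0:ℝ) ≤ 2*c*e*(a+t^2)^(-e) by positivity) h3
    nlinarith [this]
  rw [h1, abs_sub_le_iff]
  constructor <;> nlinarith [key0, key1, h2, mul_nonneg hc h2.le]

lemma abs_pk2_le (c e a t : ℝ) (hc : 0 ≤ c) (he : 0 ≤ e) (ha : 0 ≤ a) (ht : 0 < t) :
    |(-6*c*e*t * (a + t^2) ^ (-e-1) + 4*c*e*(e+1)*t^3 * (a + t^2) ^ (-e-2))|
      ≤ (4*e^2 + 10*e) * c * t * (a + t^2) ^ (-e-1) := by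
  have hA : 0 < a + t^2 := by nlinarith
  have h1 : (a + t^2) ^ (-e-2) = (a + t^2) ^ (-e-1) * (a + t^2)⁻¹ := by
    rw [show (-e-2 : ℝ) = (-e-1) - 1 by ring]; exact rpow_shift _ (-e-1) hA
  have h2 : (0:ℝ) < (a + t^2) ^ (-e-1) := Real.rpow_pos_of_pos hA _
  have h3 : t^2 * (a + t^2)⁻¹ ≤ 1 := by
    rw [mul_inv_le_iff₀ hA]; nlinarith
  have key0 : (0:ℝ) ≤ 4*c*e*(e+1)*t^3 * ((a + t^2) ^ (-e-1) * (a + t^2)⁻¹) := by positivity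
  have key1 : 4*c*e*(e+1)*t^3 * ((a + t^2) ^ (-e-1) * (a + t^2)⁻¹)
      ≤ 4*c*e*(e+1)*t * (a + t^2) ^ (-e-1) := by
    have h4 := mul_le_of_le_one_right
      (show (0:ℝ) ≤ 4*c*e*(e+1)*t*(a+t^2)^(-e-1) by positivity) h3
    nlinarith [h4]
  rw [h1, abs_le]
  constructor <;>
    nlinarith [key0, key1, h2, mul_nonneg (mul_nonneg (mul_nonneg hc he) ht.le) h2.le]

lemma cont_base (n : ℕ) {t : ℝ} (ht : t ≠ 0) (p : ℝ) :
    Continuous (fun z : EuclideanSpace ℝ (Fin n) => (‖z‖^2 + t^2) ^ p) := by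
  have h : Continuous fun z : EuclideanSpace ℝ (Fin n) => ‖z‖^2 + t^2 := by continuity
  apply h.rpow_const
  intro z; left
  have : 0 < t^2 := by positivity
  nlinarith [sq_nonneg ‖z‖]

lemma base_pos (n : ℕ) {t : ℝ} (ht : t ≠ 0) (z : EuclideanSpace ℝ (Fin n)) :
    (0:ℝ) < ‖z‖^2 + t^2 := by
  have : 0 < t^2 := by positivity
  nlinarith [sq_nonneg ‖z‖]

lemma cont_pk (n : ℕ) (c : ℝ) {t : ℝ} (ht : t ≠ 0) :
    Continuous (fun z => halfSpacePoissonKernel n c t z) := by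
  simp only [halfSpacePoissonKernel]
  exact Continuous.div continuous_const (cont_base n ht _)
    (fun z => (Real.rpow_pos_of_pos (base_pos n ht z) _).ne')

lemma cont_pk1 (n : ℕ) (c : ℝ) {t : ℝ} (ht : t ≠ 0) :
    Continuous (fun z => pk1 n c t z) := by
  simp only [pk1]
  exact (continuous_const.mul (cont_base n ht _)).sub (continuous_const.mul (cont_base n ht _))

lemma cont_pk2 (n : ℕ) (c : ℝ) {t : ℝ} (ht : t ≠ 0) :
    Continuous (fun z => pk2 n c t z) := by
  simp only [pk2]
  exact (continuous_const.mul (cont_base n ht _)).add (continuous_const.mul (cont_base n ht _))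

lemma integrable_weight (n : ℕ) (c : ℝ) (hc : 0 < c)
    (hnorm : ∀ y : ℝ, 0 < y →
      ∫ x : EuclideanSpace ℝ (Fin n), halfSpacePoissonKernel n c y x = 1)
    {r : ℝ} (hr : 0 < r) :
    Integrable (fun z : EuclideanSpace ℝ (Fin n) =>
      (‖z‖^2 + r^2) ^ (-(((n:ℝ)+1)/2))) := by
  have hint : Integrable (halfSpacePoissonKernel n c r) := by
    by_contra h
    have := hnorm r hr
    rw [integral_undef h] at this
    norm_num at this
  have heq : (fun z : EuclideanSpace ℝ (Fin n) => (‖z‖^2 + r^2) ^ (-(((n:ℝ)+1)/2)))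
      = fun z => (c*r)⁻¹ * halfSpacePoissonKernel n c r z := by
    funext z
    have hA : (0:ℝ) < ‖z‖^2 + r^2 := by positivity
    rw [halfSpacePoissonKernel, Real.rpow_neg hA.le]
    field_simp
  rw [heq]
  exact hint.const_mul _

lemma key_deriv (n : ℕ) (c : ℝ) (hc : 0 < c)
    (hnorm : ∀ y : ℝ, 0 < y →
      ∫ x : EuclideanSpace ℝ (Fin n), halfSpacePoissonKernel n c y x = 1)
    (ψ : EuclideanSpace ℝ (Fin n) → ℝ) (hψc : Continuous ψ)
    (B : ℝ) (hψ : ∀ z, |ψ z| ≤ B) {y : ℝ} (hy : 0 < y) :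
    HasDerivAt (fun t => ∫ z, halfSpacePoissonKernel n c t z * ψ z) (∫ z, pk1 n c y z * ψ z) y
    ∧ HasDerivAt (fun t => ∫ z, pk1 n c t z * ψ z) (∫ z, pk2 n c y z * ψ z) y
    ∧ Integrable (fun z => pk2 n c y z * ψ z) := by
  set e : ℝ := ((n:ℝ)+1)/2 with he_def
  have he : 0 < e := by positivity
  have hB : 0 ≤ B := (abs_nonneg _).trans (hψ 0)
  have hy2 : 0 < y/2 := half_pos hy
  have hIy2 : Integrable (fun z : EuclideanSpace ℝ (Fin n) => (‖z‖^2 + (y/2)^2)^(-e)) :=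
    integrable_weight n c hc hnorm hy2
  have hball : ∀ t ∈ ball y (y/2), y/2 < t := by
    intro t ht
    rw [mem_ball, Real.dist_eq, abs_sub_lt_iff] at ht
    linarith [ht.2]
  have hmeas0 : ∀ᶠ t in nhds y, AEStronglyMeasurable
      (fun z => halfSpacePoissonKernel n c t z * ψ z) (volume : Measure (EuclideanSpace ℝ (Fin n))) := by
    filter_upwards [eventually_gt_nhds hy] with t ht
    exact ((cont_pk n c ht.ne').mul hψc).aestronglyMeasurable
  have hFint : Integrable (fun z => halfSpacePoissonKernel n c y z * ψ z) := by
    apply Integrable.mono' (hIy2.const_mul (c*y*B))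
      ((cont_pk n c hy.ne').mul hψc).aestronglyMeasurable
    filter_upwards with z
    have hA := base_pos n hy.ne' z
    have hA2 := base_pos n hy2.ne' z
    simp only [Pi.mul_apply]
    rw [Real.norm_eq_abs, abs_mul, halfSpacePoissonKernel, abs_div]
    rw [abs_of_pos (show (0:ℝ) < c*y by positivity),
      abs_of_pos (Real.rpow_pos_of_pos hA (((n:ℝ)+1)/2)),
      show c * y / (‖z‖^2 + y^2) ^ (((n:ℝ)+1)/2) = c * y * (‖z‖^2 + y^2) ^ (-e) by
        rw [Real.rpow_neg hA.le, div_eq_mul_inv, he_def]]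
    have h4 : (‖z‖^2 + y^2) ^ (-e) ≤ (‖z‖^2 + (y/2)^2) ^ (-e) :=
      base_mono _ _ _ _ (sq_nonneg _) he.le hy2 (by linarith)
    calc c * y * (‖z‖^2 + y^2) ^ (-e) * |ψ z|
        ≤ (c * y * (‖z‖^2 + (y/2)^2) ^ (-e)) * B :=
          mul_le_mul (mul_le_mul_of_nonneg_left h4 (by positivity)) (hψ z)
            (abs_nonneg _) (by positivity)
      _ = c*y*B * (‖z‖^2 + (y/2)^2) ^ (-e) := by ring
  have hbound1 : ∀ᵐ z : EuclideanSpace ℝ (Fin n), ∀ t ∈ ball y (y/2),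
      ‖pk1 n c t z * ψ z‖ ≤ (1+2*e)*c*B * (‖z‖^2 + (y/2)^2) ^ (-e) := by
    filter_upwards with z t htb
    have ht2 : y/2 < t := hball t htb
    have ht0 : 0 < t := lt_trans hy2 ht2
    rw [Real.norm_eq_abs, abs_mul]
    have h1 : |pk1 n c t z| ≤ (1+2*e)*c * (‖z‖^2 + t^2) ^ (-e) := by
      rw [pk1, ← he_def]
      exact abs_pk1_le c e (‖z‖^2) t hc.le he.le (sq_nonneg _) ht0
    have h4 : (‖z‖^2 + t^2) ^ (-e) ≤ (‖z‖^2 + (y/2)^2) ^ (-e) :=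
      base_mono _ _ _ _ (sq_nonneg _) he.le hy2 ht2.le
    calc |pk1 n c t z| * |ψ z|
        ≤ ((1+2*e)*c * (‖z‖^2 + (y/2)^2) ^ (-e)) * B :=
          mul_le_mul (h1.trans (mul_le_mul_of_nonneg_left h4 (by positivity))) (hψ z)
            (abs_nonneg _) (by positivity)
      _ = (1+2*e)*c*B * (‖z‖^2 + (y/2)^2) ^ (-e) := by ring
  have hdiff0 : ∀ᵐ z : EuclideanSpace ℝ (Fin n), ∀ t ∈ ball y (y/2),
      HasDerivAt (fun t => halfSpacePoissonKernel n c t z * ψ z) (pk1 n c t z * ψ z) t := by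
    filter_upwards with z t htb
    have ht0 : 0 < t := lt_trans hy2 (hball t htb)
    have := (hasDerivAt_pk_aux c e (‖z‖^2) (sq_nonneg _) ht0).mul_const (ψ z)
    simpa [halfSpacePoissonKernel, pk1, he_def] using this
  have hD1 := hasDerivAt_integral_of_dominated_loc_of_deriv_le (ball_mem_nhds y hy2) hmeas0 hFint
    (((cont_pk1 n c hy.ne').mul hψc).aestronglyMeasurable) hbound1
    ((hIy2.const_mul ((1+2*e)*c*B))) hdiff0
  refine ⟨hD1.2, ?_⟩
  have hmeas1 : ∀ᶠ t in nhds y, AEStronglyMeasurable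
      (fun z => pk1 n c t z * ψ z) (volume : Measure (EuclideanSpace ℝ (Fin n))) := by
    filter_upwards [eventually_gt_nhds hy] with t ht
    exact ((cont_pk1 n c ht.ne').mul hψc).aestronglyMeasurable
  have hbound2 : ∀ᵐ z : EuclideanSpace ℝ (Fin n), ∀ t ∈ ball y (y/2),
      ‖pk2 n c t z * ψ z‖ ≤ (4*e^2+10*e)*c*(2/y)*B * (‖z‖^2 + (y/2)^2) ^ (-e) := by
    filter_upwards with z t htb
    have ht2 : y/2 < t := hball t htb
    have ht0 : 0 < t := lt_trans hy2 ht2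
    rw [Real.norm_eq_abs, abs_mul]
    have h1 : |pk2 n c t z| ≤ (4*e^2+10*e)*c*t * (‖z‖^2 + t^2) ^ (-e-1) := by
      rw [pk2, ← he_def]
      exact abs_pk2_le c e (‖z‖^2) t hc.le he.le (sq_nonneg _) ht0
    have h2 : t * (‖z‖^2 + t^2) ^ (-e-1) ≤ t⁻¹ * (‖z‖^2 + t^2) ^ (-e) :=
      t_mul_le (‖z‖^2) t e (sq_nonneg _) ht0
    have h3 : t⁻¹ ≤ 2/y := by
      rw [show (2:ℝ)/y = (y/2)⁻¹ by field_simp]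
      exact inv_anti₀ hy2 ht2.le
    have h4 : (‖z‖^2 + t^2) ^ (-e) ≤ (‖z‖^2 + (y/2)^2) ^ (-e) :=
      base_mono _ _ _ _ (sq_nonneg _) he.le hy2 ht2.le
    have hApos : (0:ℝ) < (‖z‖^2 + t^2) ^ (-e) := Real.rpow_pos_of_pos (base_pos n ht0.ne' z) _
    have h5 : |pk2 n c t z| ≤ (4*e^2+10*e)*c*(2/y) * (‖z‖^2 + (y/2)^2) ^ (-e) := by
      apply h1.trans
      have hM : (0:ℝ) ≤ (4*e^2+10*e)*c := by positivity
      calc (4*e^2+10*e)*c*t * (‖z‖^2 + t^2) ^ (-e-1)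
          = (4*e^2+10*e)*c * (t * (‖z‖^2 + t^2) ^ (-e-1)) := by ring
        _ ≤ (4*e^2+10*e)*c * (t⁻¹ * (‖z‖^2 + t^2) ^ (-e)) :=
            mul_le_mul_of_nonneg_left h2 hM
        _ ≤ (4*e^2+10*e)*c * ((2/y) * (‖z‖^2 + (y/2)^2) ^ (-e)) := by
            apply mul_le_mul_of_nonneg_left _ hM
            apply mul_le_mul h3 h4 hApos.le (by positivity)
        _ = (4*e^2+10*e)*c*(2/y) * (‖z‖^2 + (y/2)^2) ^ (-e) := by ring
    calc |pk2 n c t z| * |ψ z|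
        ≤ ((4*e^2+10*e)*c*(2/y) * (‖z‖^2 + (y/2)^2) ^ (-e)) * B :=
          mul_le_mul h5 (hψ z) (abs_nonneg _) (by positivity)
      _ = (4*e^2+10*e)*c*(2/y)*B * (‖z‖^2 + (y/2)^2) ^ (-e) := by ring
  have hdiff1 : ∀ᵐ z : EuclideanSpace ℝ (Fin n), ∀ t ∈ ball y (y/2),
      HasDerivAt (fun t => pk1 n c t z * ψ z) (pk2 n c t z * ψ z) t := by
    filter_upwards with z t htb
    have ht0 : 0 < t := lt_trans hy2 (hball t htb)
    have := (hasDerivAt_pk1_aux c e (‖z‖^2) (sq_nonneg _) ht0).mul_const (ψ z)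
    simpa [pk1, pk2, he_def] using this
  have hD2 := hasDerivAt_integral_of_dominated_loc_of_deriv_le (ball_mem_nhds y hy2) hmeas1 hD1.1
    (((cont_pk2 n c hy.ne').mul hψc).aestronglyMeasurable) hbound2
    ((hIy2.const_mul ((4*e^2+10*e)*c*(2/y)*B))) hdiff1
  exact ⟨hD2.2, hD2.1⟩

lemma taylor_bound {n : ℕ} (g : EuclideanSpace ℝ (Fin n) → ℝ) (C : ℝ)
    (hg : ContDiff ℝ 2 g) (hC : ∀ z, ‖iteratedFDeriv ℝ 2 g z‖ ≤ C)
    (x w : EuclideanSpace ℝ (Fin n)) :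
    |g (x - w) - g x + (fderiv ℝ g x) w| ≤ C * ‖w‖^2 := by
  set L := fderiv ℝ g x with hL
  have hgd : Differentiable ℝ g := hg.differentiable (by norm_num)
  have hfd : Differentiable ℝ (fderiv ℝ g) :=
    (hg.fderiv_right (m := 1) (by norm_num)).differentiable (by norm_num)
  have hCnn : 0 ≤ C := le_trans (norm_nonneg _) (hC x)
  have hbound2 : ∀ z, ‖fderiv ℝ (fderiv ℝ g) z‖ ≤ C := by
    intro z
    calc ‖fderiv ℝ (fderiv ℝ g) z‖
        = ‖iteratedFDeriv ℝ 0 (fderiv ℝ (fderiv ℝ g)) z‖ := by rw [norm_iteratedFDeriv_zero]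
      _ = ‖iteratedFDeriv ℝ 1 (fderiv ℝ g) z‖ := norm_iteratedFDeriv_fderiv
      _ = ‖iteratedFDeriv ℝ 2 g z‖ := norm_iteratedFDeriv_fderiv
      _ ≤ C := hC z
  have hlip : ∀ z, ‖fderiv ℝ g z - L‖ ≤ C * ‖z - x‖ := by
    intro z
    exact convex_univ.norm_image_sub_le_of_norm_fderiv_le (f := fderiv ℝ g)
      (fun u _ => hfd u) (fun u _ => hbound2 u) (Set.mem_univ x) (Set.mem_univ z)
  have hφd : ∀ u, DifferentiableAt ℝ (fun u => g u - L u) u :=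
    fun u => (hgd u).sub (L.differentiable.differentiableAt)
  have hφf : ∀ u, fderiv ℝ (fun u => g u - L u) u = fderiv ℝ g u - L := by
    intro u
    rw [fderiv_fun_sub (hgd u) L.differentiable.differentiableAt, L.fderiv]
  have hmem : x - w ∈ Metric.closedBall x ‖w‖ := by
    rw [Metric.mem_closedBall, dist_eq_norm]
    simp
  have key := (convex_closedBall x ‖w‖).norm_image_sub_le_of_norm_fderiv_le
    (f := fun u => g u - L u) (C := C * ‖w‖) (fun u _ => hφd u)
    (fun u hu => by
      rw [hφf]
      refine (hlip u).trans (mul_le_mul_of_nonneg_left ?_ hCnn)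
      rw [Metric.mem_closedBall, dist_eq_norm] at hu
      exact hu)
    (Metric.mem_closedBall_self (norm_nonneg w)) hmem
  have heq : (g (x - w) - L (x - w)) - (g x - L x) = g (x - w) - g x + L w := by
    rw [map_sub]; ring
  rw [Real.norm_eq_abs, heq] at key
  have : ‖x - w - x‖ = ‖w‖ := by simp
  rw [this] at key
  calc |g (x - w) - g x + L w| ≤ C * ‖w‖ * ‖w‖ := key
    _ = C * ‖w‖^2 := by ring

lemma pk2_zero_and_integrable (n : ℕ) (c : ℝ) (hc : 0 < c)
    (hnorm : ∀ y : ℝ, 0 < y →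
      ∫ x : EuclideanSpace ℝ (Fin n), halfSpacePoissonKernel n c y x = 1)
    {y : ℝ} (hy : 0 < y) :
    (∫ z, pk2 n c y z) = 0 ∧ Integrable (fun z => pk2 n c y z) := by
  have K : ∀ {t : ℝ}, 0 < t →
      (HasDerivAt (fun t => ∫ z, halfSpacePoissonKernel n c t z * (1:ℝ))
          (∫ z, pk1 n c t z * (1:ℝ)) t
        ∧ HasDerivAt (fun t => ∫ z, pk1 n c t z * (1:ℝ))
          (∫ z, pk2 n c t z * (1:ℝ)) t
        ∧ Integrable (fun z => pk2 n c t z * (1:ℝ))) :=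
    fun {t} ht => key_deriv n c hc hnorm (fun _ => (1:ℝ)) continuous_const 1
      (fun z => by norm_num) ht
  simp only [mul_one] at K
  have hJ : ∀ t : ℝ, 0 < t → (∫ z, pk1 n c t z) = 0 := by
    intro t ht
    have h1 := (K ht).1
    have heq : (fun t => ∫ z, halfSpacePoissonKernel n c t z) =ᶠ[nhds t] fun _ => (1:ℝ) := by
      filter_upwards [eventually_gt_nhds ht] with u hu
      exact hnorm u hu
    have h2 : HasDerivAt (fun t => ∫ z, halfSpacePoissonKernel n c t z) 0 t :=
      (hasDerivAt_const t (1:ℝ)).congr_of_eventuallyEq heq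
    exact h1.unique h2
  refine ⟨?_, (K hy).2.2⟩
  have h1 := (K hy).2.1
  have heq : (fun t => ∫ z, pk1 n c t z) =ᶠ[nhds y] fun _ => (0:ℝ) := by
    filter_upwards [eventually_gt_nhds hy] with u hu
    exact hJ u hu
  have h2 : HasDerivAt (fun t => ∫ z, pk1 n c t z) 0 y :=
    (hasDerivAt_const y (0:ℝ)).congr_of_eventuallyEq heq
  exact h1.unique h2

lemma pk2_moment_zero (n : ℕ) (c y : ℝ) (L : EuclideanSpace ℝ (Fin n) →L[ℝ] ℝ) :
    (∫ z, pk2 n c y z * L z) = 0 := by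
  have h := integral_neg_eq_self (fun z => pk2 n c y z * L z) volume
  have h2 : (fun z : EuclideanSpace ℝ (Fin n) => pk2 n c y (-z) * L (-z))
      = fun z => -(pk2 n c y z * L z) := by
    funext z
    rw [map_neg]
    simp only [pk2, norm_neg]
    ring
  rw [h2] at h
  rw [integral_neg] at h
  linarith [h]

lemma integrable_pk (n : ℕ) (c : ℝ)
    (hnorm : ∀ y : ℝ, 0 < y →
      ∫ x : EuclideanSpace ℝ (Fin n), halfSpacePoissonKernel n c y x = 1)
    {y : ℝ} (hy : 0 < y) : Integrable (halfSpacePoissonKernel n c y) := by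
  by_contra h
  have := hnorm y hy
  rw [integral_undef h] at this
  norm_num at this

set_option maxHeartbeats 2000000 in
/-- Let `g` be bounded with all derivatives up to order 2 bounded by `C`,
and `u_g` its Poisson extension (normalized kernel). Then for `0 < s ≤ 1`,
`y^{2−s} |∂²u_g/∂y²(x,y)| ≤ K C min(y^{2−s}, y^{−s})`; in particular the bound tends to `0`
uniformly in `x` as `y → 0⁺` and as `y → ∞`. -/
theorem poisson_extension_second_derivative_decay (n : ℕ) (s : ℝ)
    (hs0 : 0 < s) (hs1 : s ≤ 1) (c : ℝ) (hc : 0 < c)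
    (hnorm : ∀ y : ℝ, 0 < y →
      ∫ x : EuclideanSpace ℝ (Fin n), halfSpacePoissonKernel n c y x = 1) :
    ∃ K > 0, ∀ (g : EuclideanSpace ℝ (Fin n) → ℝ) (C : ℝ),
      ContDiff ℝ 2 g →
      (∀ (m : ℕ), m ≤ 2 → ∀ x, ‖iteratedFDeriv ℝ m g x‖ ≤ C) →
      ∀ (x : EuclideanSpace ℝ (Fin n)) (y : ℝ), 0 < y →
        y ^ (2 - s) *
          |iteratedDeriv 2 (fun t => ∫ z, halfSpacePoissonKernel n c t (x - z) * g z) y| ≤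
        K * C * min (y ^ (2 - s)) (y ^ (-s)) := by
  set e : ℝ := ((n:ℝ)+1)/2 with he_def
  have he : 0 < e := by rw [he_def]; positivity
  refine ⟨4*e^2 + 10*e, by nlinarith, ?_⟩
  intro g C hg hC x y hy
  set M : ℝ := 4*e^2 + 10*e with hM_def
  have hMpos : 0 < M := by nlinarith
  set ψ : EuclideanSpace ℝ (Fin n) → ℝ := fun z => g (x - z) with hψ_def
  have hψc : Continuous ψ := hg.continuous.comp (continuous_const.sub continuous_id)
  have hψb : ∀ z, |ψ z| ≤ C := by
    intro z
    show |g (x - z)| ≤ C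
    have h0 := hC 0 (by norm_num) (x - z)
    rw [norm_iteratedFDeriv_zero, Real.norm_eq_abs] at h0
    exact h0
  have hC0 : 0 ≤ C := (abs_nonneg _).trans (hψb 0)
  have hu : (fun t => ∫ z, halfSpacePoissonKernel n c t (x - z) * g z)
      = fun t => ∫ z, halfSpacePoissonKernel n c t z * ψ z := by
    funext t
    have h := integral_sub_left_eq_self (fun z => halfSpacePoissonKernel n c t z * ψ z) volume x
    rw [← h]
    congr 1
    funext z
    have : ψ (x - z) = g z := by rw [hψ_def]; simp
    rw [this]
  rw [hu]
  have hKey := key_deriv n c hc hnorm ψ hψc C hψb hy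
  have hd2 : iteratedDeriv 2 (fun t => ∫ z, halfSpacePoissonKernel n c t z * ψ z) y
      = ∫ z, pk2 n c y z * ψ z := by
    rw [iteratedDeriv_succ, iteratedDeriv_one]
    have hev : deriv (fun t => ∫ z, halfSpacePoissonKernel n c t z * ψ z)
        =ᶠ[nhds y] fun t => ∫ z, pk1 n c t z * ψ z := by
      filter_upwards [eventually_gt_nhds hy] with t ht
      exact ((key_deriv n c hc hnorm ψ hψc C hψb ht).1).deriv
    rw [Filter.EventuallyEq.deriv_eq hev]
    exact (hKey.2.1).deriv
  rw [hd2]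
  have hpk : Integrable (halfSpacePoissonKernel n c y) := integrable_pk n c hnorm hy
  have hIpk : ∫ z, halfSpacePoissonKernel n c y z = 1 := hnorm y hy
  -- pointwise bound for pk2
  have habs_pk2 : ∀ z : EuclideanSpace ℝ (Fin n),
      |pk2 n c y z| ≤ M * c * y * (‖z‖^2 + y^2) ^ (-e-1) := by
    intro z
    rw [hM_def]
    have := abs_pk2_le c e (‖z‖^2) y hc.le he.le (sq_nonneg _) hy
    rw [pk2, ← he_def]
    exact this
  have hpk_eq : ∀ z : EuclideanSpace ℝ (Fin n),
      halfSpacePoissonKernel n c y z = c * y * (‖z‖^2 + y^2) ^ (-e) := by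
    intro z
    have hA := base_pos n hy.ne' z
    rw [halfSpacePoissonKernel, ← he_def, Real.rpow_neg hA.le, div_eq_mul_inv]
  -- Bound 1 : |∫| ≤ M*C*(y⁻¹*y⁻¹)
  have hbd1 : |∫ z, pk2 n c y z * ψ z| ≤ M * C * (y⁻¹*y⁻¹) := by
    have hpt : ∀ z : EuclideanSpace ℝ (Fin n),
        ‖pk2 n c y z * ψ z‖ ≤ M*C*(y⁻¹*y⁻¹) * halfSpacePoissonKernel n c y z := by
      intro z
      rw [Real.norm_eq_abs, abs_mul]
      have h1 := habs_pk2 z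
      have h2 : y * (‖z‖^2 + y^2) ^ (-e-1) ≤ y⁻¹ * (‖z‖^2 + y^2) ^ (-e) :=
        t_mul_le (‖z‖^2) y e (sq_nonneg _) hy
      calc |pk2 n c y z| * |ψ z| ≤ (M * c * (y * (‖z‖^2 + y^2) ^ (-e-1))) * C := by
            apply mul_le_mul _ (hψb z) (abs_nonneg _) (by positivity)
            calc |pk2 n c y z| ≤ M * c * y * (‖z‖^2 + y^2) ^ (-e-1) := h1
              _ = M * c * (y * (‖z‖^2 + y^2) ^ (-e-1)) := by ring
        _ ≤ (M * c * (y⁻¹ * (‖z‖^2 + y^2) ^ (-e))) * C :=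
            mul_le_mul_of_nonneg_right (mul_le_mul_of_nonneg_left h2 (by positivity)) hC0
        _ = M*C*(y⁻¹*y⁻¹) * (c * y * (‖z‖^2 + y^2) ^ (-e)) := by
            field_simp
        _ = M*C*(y⁻¹*y⁻¹) * halfSpacePoissonKernel n c y z := by rw [hpk_eq z]
    rw [← Real.norm_eq_abs]
    calc ‖∫ z, pk2 n c y z * ψ z‖ ≤ ∫ z, M*C*(y⁻¹*y⁻¹) * halfSpacePoissonKernel n c y z :=
          norm_integral_le_of_norm_le (hpk.const_mul (M*C*(y⁻¹*y⁻¹)))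
            (Filter.Eventually.of_forall hpt)
      _ = M*C*(y⁻¹*y⁻¹) * ∫ z, halfSpacePoissonKernel n c y z := integral_const_mul _ _
      _ = M * C * (y⁻¹*y⁻¹) := by rw [hIpk, mul_one]
  -- Bound 2 : |∫| ≤ M*C
  have hzero := pk2_zero_and_integrable n c hc hnorm hy
  set L : EuclideanSpace ℝ (Fin n) →L[ℝ] ℝ := fderiv ℝ g x with hL_def
  have hmom : (∫ z, pk2 n c y z * L z) = 0 := pk2_moment_zero n c y L
  have i1 : Integrable (fun z => pk2 n c y z * ψ z) := hKey.2.2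
  have i2 : Integrable (fun z => pk2 n c y z * g x) := hzero.2.mul_const (g x)
  have i3 : Integrable (fun z => pk2 n c y z * L z) := by
    apply Integrable.mono'
      ((integrable_weight n c hc hnorm hy).const_mul (M*c*‖L‖))
      (((cont_pk2 n c hy.ne').mul L.continuous).aestronglyMeasurable)
    filter_upwards with z
    have hA := base_pos n hy.ne' z
    have h1 := habs_pk2 z
    have h2 : |L z| ≤ ‖L‖ * ‖z‖ := by
      rw [← Real.norm_eq_abs]; exact L.le_opNorm z
    have h3 : y * ‖z‖ * (‖z‖^2 + y^2) ^ (-e-1) ≤ (‖z‖^2 + y^2) ^ (-e) := by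
      apply mul_rpow_shift_le _ _ _ hA
      nlinarith [sq_nonneg (y - ‖z‖), norm_nonneg z]
    simp only [Pi.mul_apply]
    rw [Real.norm_eq_abs, abs_mul]
    calc |pk2 n c y z| * |L z|
        ≤ (M * c * y * (‖z‖^2 + y^2) ^ (-e-1)) * (‖L‖ * ‖z‖) := by
          apply mul_le_mul h1 h2 (abs_nonneg _) (by positivity)
      _ = M * c * ‖L‖ * (y * ‖z‖ * (‖z‖^2 + y^2) ^ (-e-1)) := by ring
      _ ≤ M * c * ‖L‖ * (‖z‖^2 + y^2) ^ (-e) :=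
          mul_le_mul_of_nonneg_left h3 (by positivity)
      _ = M*c*‖L‖ * (‖z‖^2 + y^2) ^ (-(((n:ℝ)+1)/2)) := by rw [← he_def]
  have hsplit : (∫ z, pk2 n c y z * ψ z)
      = ∫ z, pk2 n c y z * (ψ z - g x + L z) := by
    have heq : (fun z => pk2 n c y z * (ψ z - g x + L z))
        = fun z => (pk2 n c y z * ψ z - pk2 n c y z * g x) + pk2 n c y z * L z := by
      funext z; ring
    have i12 : Integrable (fun z => pk2 n c y z * ψ z - pk2 n c y z * g x) := i1.sub i2
    rw [heq, integral_add i12 i3, integral_sub i1 i2, hmom,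
      integral_mul_const, hzero.1, zero_mul]
    ring
  have hbd2 : |∫ z, pk2 n c y z * ψ z| ≤ M * C := by
    have hC2 : ∀ z, ‖iteratedFDeriv ℝ 2 g z‖ ≤ C := hC 2 le_rfl
    have hpt : ∀ z : EuclideanSpace ℝ (Fin n),
        ‖pk2 n c y z * (ψ z - g x + L z)‖ ≤ M*C * halfSpacePoissonKernel n c y z := by
      intro z
      have hA := base_pos n hy.ne' z
      have h1 := habs_pk2 z
      have hT : |ψ z - g x + L z| ≤ C * ‖z‖^2 := taylor_bound g C hg hC2 x z
      have h3 : ‖z‖^2 * (‖z‖^2 + y^2) ^ (-e-1) ≤ (‖z‖^2 + y^2) ^ (-e) := by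
        apply mul_rpow_shift_le _ _ _ hA
        nlinarith [sq_nonneg y]
      rw [Real.norm_eq_abs, abs_mul]
      calc |pk2 n c y z| * |ψ z - g x + L z|
          ≤ (M * c * y * (‖z‖^2 + y^2) ^ (-e-1)) * (C * ‖z‖^2) := by
            apply mul_le_mul h1 hT (abs_nonneg _) (by positivity)
        _ = M * C * (c * y) * (‖z‖^2 * (‖z‖^2 + y^2) ^ (-e-1)) := by ring
        _ ≤ M * C * (c * y) * (‖z‖^2 + y^2) ^ (-e) :=
            mul_le_mul_of_nonneg_left h3 (by positivity)
        _ = M*C * halfSpacePoissonKernel n c y z := by rw [hpk_eq z]; ring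
    rw [hsplit, ← Real.norm_eq_abs]
    calc ‖∫ z, pk2 n c y z * (ψ z - g x + L z)‖
        ≤ ∫ z, M*C * halfSpacePoissonKernel n c y z :=
          norm_integral_le_of_norm_le (hpk.const_mul (M*C))
            (Filter.Eventually.of_forall hpt)
      _ = M*C * ∫ z, halfSpacePoissonKernel n c y z := integral_const_mul _ _
      _ = M * C := by rw [hIpk, mul_one]
  -- combine
  have hmin : |∫ z, pk2 n c y z * ψ z| ≤ M * C * min 1 (y⁻¹*y⁻¹) := by
    rw [mul_min_of_nonneg _ _ (by positivity : (0:ℝ) ≤ M * C)]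
    exact le_min (by simpa using hbd2) hbd1
  have hyp : (0:ℝ) ≤ y ^ (2-s) := Real.rpow_nonneg hy.le _
  have hfinal : y ^ (2-s) * min 1 (y⁻¹*y⁻¹) = min (y ^ (2-s)) (y ^ (-s)) := by
    rw [mul_min_of_nonneg _ _ hyp, mul_one]
    congr 1
    rw [← Real.rpow_neg_one y, ← Real.rpow_add hy, ← Real.rpow_add hy]
    congr 1
    ring
  calc y ^ (2-s) * |∫ z, pk2 n c y z * ψ z|
      ≤ y ^ (2-s) * (M * C * min 1 (y⁻¹*y⁻¹)) := mul_le_mul_of_nonneg_left hmin hyp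
    _ = M * C * (y ^ (2-s) * min 1 (y⁻¹*y⁻¹)) := by ring
    _ = M * C * min (y ^ (2-s)) (y ^ (-s)) := by rw [hfinal]
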